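/- If a family (F_S)_{S ⊆ [m]} of integrable functions on [0,1]^m satisfies that each F_S depends only on the coordinates in S and ∫_0^1 F_S dx_i = 0 for every i ∈ S, and if Σ_{S ⊆ [m]} F_S = 0 almost everywhere, then F_S = 0 almost everywhere for every S ⊆ [m]. -/

import Mathlib

open MeasureTheory

/-- The unit cube `[0,1]^m` as a subset of `Fin m → ℝ`. -/
def unitCube (m : ℕ) : Set (Fin m → ℝ) := Set.univ.pi fun _ => Set.Icc (0 : ℝ) 1

namespace WalshUniqueAux

/-- The restricted Lebesgue measure on `[0,1]`. -/
noncomputable def μI : Measure ℝ := volume.restrict (Set.Icc 0 1)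

instance : SigmaFinite μI := by unfold μI; infer_instance

lemma μI_univ : μI Set.univ = 1 := by
  simp [μI, Measure.restrict_apply_univ, Real.volume_Icc]

lemma cube_eq (m : ℕ) :
    (volume : Measure (Fin m → ℝ)).restrict (unitCube m) =
      Measure.pi fun _ : Fin m => μI := by
  refine (Measure.pi_eq fun s hs => ?_).symm
  rw [Measure.restrict_apply (MeasurableSet.univ_pi hs), unitCube,
    ← Set.pi_inter_distrib, volume_pi_pi]
  simp [μI, Measure.restrict_apply (hs _)]

lemma update_insertNth {n : ℕ} (i : Fin (n + 1)) (t t' : ℝ) (y : Fin n → ℝ) :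
    Function.update (i.insertNth t' y : Fin (n + 1) → ℝ) i t = i.insertNth t y := by
  funext j
  rcases eq_or_ne j i with rfl | hj
  · simp
  · obtain ⟨k, rfl⟩ := Fin.exists_succAbove_eq hj
    rw [Function.update_of_ne hj, Fin.insertNth_apply_succAbove,
      Fin.insertNth_apply_succAbove]

lemma powerset_erase {m : ℕ} (T : Finset (Fin m)) (i : Fin m) :
    (T.erase i).powerset = T.powerset.filter (fun S => i ∉ S) := by
  ext S
  simp [Finset.mem_powerset, Finset.subset_erase, and_comm]

/-- Key step: integrating out the `i`-th coordinate. -/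
lemma key_step {m : ℕ} (F : Finset (Fin m) → (Fin m → ℝ) → ℂ)
    (hint : ∀ S : Finset (Fin m), IntegrableOn (F S) (unitCube m))
    (hdep : ∀ S : Finset (Fin m), ∀ x y : Fin m → ℝ, (∀ i ∈ S, x i = y i) → F S x = F S y)
    (hmarg : ∀ S : Finset (Fin m), ∀ i ∈ S, ∀ x : Fin m → ℝ,
        ∫ t in (0:ℝ)..1, F S (Function.update x i t) = 0)
    (T : Finset (Fin m)) (i : Fin m)
    (hP : ∀ᵐ x ∂(volume.restrict (unitCube m)), ∑ S ∈ T.powerset, F S x = 0) :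
    ∀ᵐ x ∂(volume.restrict (unitCube m)), ∑ S ∈ (T.erase i).powerset, F S x = 0 := by
  have hm : m ≠ 0 := by rintro rfl; exact i.elim0
  obtain ⟨n, rfl⟩ := Nat.exists_eq_succ_of_ne_zero hm
  set μpi : Measure (Fin (n + 1) → ℝ) := Measure.pi fun _ => μI with hμpi
  set νrest : Measure (Fin n → ℝ) := Measure.pi fun _ => μI with hνrest
  set e := MeasurableEquiv.piFinSuccAbove (fun _ : Fin (n + 1) => ℝ) i with he
  have hmp : MeasurePreserving e μpi (μI.prod νrest) :=
    measurePreserving_piFinSuccAbove (fun _ => μI) i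
  have hesymm : ∀ p : ℝ × (Fin n → ℝ), e.symm p = i.insertNth p.1 p.2 := by
    intro p
    simp [he, MeasurableEquiv.piFinSuccAbove_symm_apply, Fin.insertNthEquiv]
  rw [cube_eq] at hP ⊢
  -- transfer the hypothesis to the product space
  have hs : ∀ᵐ p ∂(μI.prod νrest), ∑ S ∈ T.powerset, F S (i.insertNth p.1 p.2) = 0 := by
    have := (hmp.symm e).quasiMeasurePreserving.ae hP
    filter_upwards [this] with p hp
    rwa [hesymm] at hp
  -- integrability of each slice
  have hFint : ∀ S : Finset (Fin (n + 1)),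
      Integrable (fun p : ℝ × (Fin n → ℝ) => F S (i.insertNth p.1 p.2)) (μI.prod νrest) := by
    intro S
    have h1 : Integrable (F S) μpi := by
      have := hint S
      rwa [IntegrableOn, cube_eq] at this
    rw [← hmp.map_eq, MeasureTheory.integrable_map_equiv]
    refine h1.congr ?_
    filter_upwards with x
    simp only [Function.comp_apply]
    congr 1
    have := hesymm (e x)
    rw [MeasurableEquiv.symm_apply_apply] at this
    rw [← this]
  have hslice_int : ∀ᵐ y ∂νrest, ∀ S : Finset (Fin (n + 1)),
      Integrable (fun t => F S (i.insertNth t y)) μI := by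
    rw [ae_all_iff]
    intro S
    exact (hFint S).prod_left_ae
  -- swap to get slices in t for a.e. y
  have hswap : MeasurePreserving (Prod.swap : (Fin n → ℝ) × ℝ → ℝ × (Fin n → ℝ))
      (νrest.prod μI) (μI.prod νrest) := ⟨measurable_swap, Measure.prod_swap⟩
  have hslice_sum : ∀ᵐ y ∂νrest, ∀ᵐ t ∂μI,
      ∑ S ∈ T.powerset, F S (i.insertNth t y) = 0 := by
    have := hswap.quasiMeasurePreserving.ae hs
    exact MeasureTheory.Measure.ae_ae_of_ae_prod this
  -- for a.e. y, conclude the reduced sum vanishes at `insertNth i 0 y`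
  have hy : ∀ᵐ y ∂νrest, ∑ S ∈ (T.erase i).powerset, F S (i.insertNth 0 y) = 0 := by
    filter_upwards [hslice_int, hslice_sum] with y h1 h2
    have h0 : ∫ t, (∑ S ∈ T.powerset, F S (i.insertNth t y)) ∂μI = 0 :=
      integral_eq_zero_of_ae h2
    rw [integral_finset_sum T.powerset (fun S _ => h1 S)] at h0
    have hterm : ∀ S ∈ T.powerset,
        ∫ t, F S (i.insertNth t y) ∂μI =
          if i ∈ S then 0 else F S (i.insertNth 0 y) := by
      intro S _
      by_cases hiS : i ∈ S
      · rw [if_pos hiS]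
        have : ∀ t : ℝ, F S (i.insertNth t y) =
            F S (Function.update (i.insertNth 0 y) i t) := by
          intro t; rw [update_insertNth]
        simp_rw [this]
        have := hmarg S i hiS (i.insertNth 0 y)
        rw [intervalIntegral.integral_of_le zero_le_one] at this
        rw [show μI = volume.restrict (Set.Icc (0:ℝ) 1) from rfl,
          MeasureTheory.integral_Icc_eq_integral_Ioc]
        exact this
      · rw [if_neg hiS]
        have hconst : ∀ t : ℝ, F S (i.insertNth t y) = F S (i.insertNth 0 y) := by
          intro t
          refine hdep S _ _ fun j hj => ?_
          have hji : j ≠ i := fun h => hiS (h ▸ hj)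
          obtain ⟨k, rfl⟩ := Fin.exists_succAbove_eq hji
          rw [Fin.insertNth_apply_succAbove, Fin.insertNth_apply_succAbove]
        simp_rw [hconst]
        rw [integral_const]
        rw [measureReal_def, μI_univ]
        simp
    rw [Finset.sum_congr rfl hterm, Finset.sum_ite, Finset.sum_const_zero, zero_add] at h0
    rwa [powerset_erase]
  -- lift back to the full measure
  have hq : ∀ᵐ p ∂(μI.prod νrest),
      ∑ S ∈ (T.erase i).powerset, F S (i.insertNth 0 p.2) = 0 :=
    MeasureTheory.Measure.quasiMeasurePreserving_snd.ae hy
  have hq' : ∀ᵐ p ∂(μI.prod νrest),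
      ∑ S ∈ (T.erase i).powerset, F S (i.insertNth p.1 p.2) = 0 := by
    filter_upwards [hq] with p hp
    rw [← hp]
    refine Finset.sum_congr rfl fun S hS => ?_
    refine hdep S _ _ fun j hj => ?_
    have hiS : i ∉ S := fun hi =>
      (Finset.notMem_erase i T) ((Finset.mem_powerset.1 hS) hi)
    have hji : j ≠ i := fun h => hiS (h ▸ hj)
    obtain ⟨k, rfl⟩ := Fin.exists_succAbove_eq hji
    rw [Fin.insertNth_apply_succAbove, Fin.insertNth_apply_succAbove]
  have := hmp.quasiMeasurePreserving.ae hq'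
  filter_upwards [this] with x hx
  have hxx : i.insertNth (e x).1 (e x).2 = x := by
    have := hesymm (e x)
    rw [MeasurableEquiv.symm_apply_apply] at this
    exact this.symm
  rwa [hxx] at hx

end WalshUniqueAux

open WalshUniqueAux in
/-- uniqueness of the generalized Walsh expansion. If a family of generalized
Walsh functions sums to `0` almost everywhere on the cube, then every member of the family
vanishes almost everywhere on the cube. -/
theorem walsh_expansion_unique {m : ℕ} (F : Finset (Fin m) → (Fin m → ℝ) → ℂ)
    (hint : ∀ S : Finset (Fin m), IntegrableOn (F S) (unitCube m))
    (hdep : ∀ S : Finset (Fin m), ∀ x y : Fin m → ℝ, (∀ i ∈ S, x i = y i) → F S x = F S y)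
    (hmarg : ∀ S : Finset (Fin m), ∀ i ∈ S, ∀ x : Fin m → ℝ,
        ∫ t in (0:ℝ)..1, F S (Function.update x i t) = 0)
    (hsum : ∀ᵐ x ∂(volume.restrict (unitCube m)), ∑ S : Finset (Fin m), F S x = 0) :
    ∀ S : Finset (Fin m), ∀ᵐ x ∂(volume.restrict (unitCube m)), F S x = 0 := by
  -- Step A: for every `T`, the partial sum over subsets of `T` vanishes a.e.
  have hA : ∀ (k : ℕ) (T : Finset (Fin m)), Tᶜ.card ≤ k →
      ∀ᵐ x ∂(volume.restrict (unitCube m)), ∑ S ∈ T.powerset, F S x = 0 := by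
    intro k
    induction k with
    | zero =>
      intro T hT
      have hTu : T = Finset.univ := by
        have : Tᶜ = ∅ := Finset.card_eq_zero.1 (Nat.le_zero.1 hT)
        rwa [Finset.compl_eq_empty_iff] at this
      subst hTu
      rw [Finset.powerset_univ]
      exact hsum
    | succ k ih =>
      intro T hT
      by_cases hTu : T = Finset.univ
      · subst hTu
        rw [Finset.powerset_univ]
        exact hsum
      · obtain ⟨i, hi⟩ : ∃ i, i ∉ T := by
          by_contra h
          push_neg at h
          exact hTu (Finset.eq_univ_iff_forall.2 h)
        have hcard : ((insert i T)ᶜ).card ≤ k := by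
          rw [Finset.card_compl, Finset.card_insert_of_notMem hi]
          rw [Finset.card_compl] at hT
          have := T.card_le_univ
          simp only [Fintype.card_fin] at *
          omega
        have hstep := key_step F hint hdep hmarg (insert i T) i (ih (insert i T) hcard)
        rwa [Finset.erase_insert hi] at hstep
  have hP : ∀ T : Finset (Fin m),
      ∀ᵐ x ∂(volume.restrict (unitCube m)), ∑ S ∈ T.powerset, F S x = 0 :=
    fun T => hA Tᶜ.card T le_rfl
  -- Step B: induction on the size of `S`
  have hB : ∀ (k : ℕ) (S : Finset (Fin m)), S.card ≤ k →
      ∀ᵐ x ∂(volume.restrict (unitCube m)), F S x = 0 := by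
    intro k
    induction k with
    | zero =>
      intro S hS
      have : S = ∅ := Finset.card_eq_zero.1 (Nat.le_zero.1 hS)
      subst this
      have := hP ∅
      simpa [Finset.powerset_empty] using this
    | succ k ih =>
      intro S hS
      have hsmall : ∀ᵐ x ∂(volume.restrict (unitCube m)),
          ∀ R : Finset (Fin m), R.card ≤ k → F R x = 0 := by
        rw [ae_all_iff]
        intro R
        by_cases hR : R.card ≤ k
        · filter_upwards [ih R hR] with x hx _
          exact hx
        · filter_upwards with x hx
          exact absurd hx hR
      filter_upwards [hP S, hsmall] with x h1 h2
      have hsplit : F S x + ∑ R ∈ S.powerset.erase S, F R x =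
          ∑ R ∈ S.powerset, F R x :=
        Finset.add_sum_erase _ (fun R => F R x) (Finset.mem_powerset_self S)
      have hzero : ∑ R ∈ S.powerset.erase S, F R x = 0 := by
        refine Finset.sum_eq_zero fun R hR => ?_
        obtain ⟨hRne, hRsub⟩ := Finset.mem_erase.1 hR
        have hss : R ⊂ S := Finset.ssubset_iff_subset_ne.2
          ⟨Finset.mem_powerset.1 hRsub, hRne⟩
        have : R.card < S.card := Finset.card_lt_card hss
        exact h2 R (by omega)
      rw [hzero, add_zero] at hsplit
      rw [hsplit, h1]
  exact fun S => hB S.card S le_rfl
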